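/- Let C = {c_1,…,c_m} be candidate locations, E = {e_1,…,e_n} expert locations in a normed vector space, ≻^k a top-k ranking profile, and q̂ ∈ ℝ^m any vector consistent with ≻^k. Suppose (i) every candidate location lies in ∪_{i∈[n]} B(e_i, r) for some r > 0, and (ii) diam(G(C,E,≻^k)[δ], V(≻^k)) < +∞ for some δ > 0. Then every candidate j* maximizing q̂_j over j ∈ V(≻^k) satisfies max_{j∈[m]} d_G(j*, j) ≤ r + 2δ·diam(G(C,E,≻^k)[δ], V(≻^k)), where d_G is the shortest directed path distance in G(C, E, ≻^k). -/

import Mathlib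

open scoped Classical

section VotingDefs

variable {V : Type*} [NormedAddCommGroup V] [NormedSpace ℝ V]

/-- An expert with top-`k` ranking `pref : Fin k → Fin m` prefers candidate `j` to `j'`:
`j` is ranked at some position `h`, and `j'` is either unranked or ranked strictly later. -/
def Prefers {k m : ℕ} (pref : Fin k → Fin m) (j j' : Fin m) : Prop :=
  ∃ h : Fin k, pref h = j ∧
    ((∀ h' : Fin k, pref h' ≠ j') ∨ ∃ h' : Fin k, pref h' = j' ∧ h < h')

/-- `q` is consistent with the profile `pref` of top-`k` rankings, given candidate
locations `c` and expert locations `e`. -/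
def Consistent {n k m : ℕ} (c : Fin m → V) (e : Fin n → V)
    (pref : Fin n → Fin k → Fin m) (q : Fin m → ℝ) : Prop :=
  ∀ (i : Fin n) (j j' : Fin m), Prefers (pref i) j j' →
    q j' - ‖e i - c j'‖ ≤ q j - ‖e i - c j‖

/-- Edge relation of the graph `G(C, E, ≻^k)`. -/
def HasEdge {n k m : ℕ} (pref : Fin n → Fin k → Fin m) (j j' : Fin m) : Prop :=
  ∃ i : Fin n, Prefers (pref i) j j'

/-- Weight of the edge `j → j'` in `G(C, E, ≻^k)`: the minimum of
`‖e i - c j'‖ - ‖e i - c j‖` over experts `i` preferring `j` to `j'`. -/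
noncomputable def weightG {n k m : ℕ} (c : Fin m → V) (e : Fin n → V)
    (pref : Fin n → Fin k → Fin m) (j j' : Fin m) : ℝ :=
  sInf {x : ℝ | ∃ i : Fin n, Prefers (pref i) j j' ∧ x = ‖e i - c j'‖ - ‖e i - c j‖}

/-- A directed walk along `edge` from `g` to `h`, recorded as its list of vertices. -/
def IsWalk {α : Type*} (edge : α → α → Prop) (l : List α) (g h : α) : Prop :=
  l.Chain' edge ∧ l.head? = some g ∧ l.getLast? = some h

/-- Total weight of a walk (sum of the weights of consecutive pairs). -/
noncomputable def walkWeight {α : Type*} (w : α → α → ℝ) (l : List α) : ℝ :=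
  ((l.zip l.tail).map fun p => w p.1 p.2).sum

/-- Shortest directed path distance; `+∞` if there is no directed path. -/
noncomputable def distG {α : Type*} (edge : α → α → Prop) (w : α → α → ℝ) (g h : α) : EReal :=
  sInf {x : EReal | ∃ l : List α, IsWalk edge l g h ∧ x = ((walkWeight w l : ℝ) : EReal)}

/-- Distance (number of edges) in an unweighted directed graph; `⊤` if unreachable. -/
noncomputable def hopDist {α : Type*} (edge : α → α → Prop) (g h : α) : ℕ∞ :=
  sInf {x : ℕ∞ | ∃ l : List α, IsWalk edge l g h ∧ x = ((l.length - 1 : ℕ) : ℕ∞)}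

/-- `diam(G, S)`: the longest shortest-path length between two vertices of `S`. -/
noncomputable def diamS {α : Type*} (edge : α → α → Prop) (S : Set α) : ℕ∞ :=
  ⨆ (u : α) (_ : u ∈ S) (v : α) (_ : v ∈ S), hopDist edge u v

/-- Edge relation of the unweighted graph `G(C, E, ≻^k)[δ]`. -/
def EdgeDelta {n k m : ℕ} (e : Fin n → V) (pref : Fin n → Fin k → Fin m) (δ : ℝ)
    (j j' : Fin m) : Prop :=
  ∃ i i' : Fin n, Prefers (pref i) j j' ∧ Prefers (pref i') j' j ∧ ‖e i - e i'‖ ≤ δ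

/-- Minimum cardinality of an internal `δ`-cover of `Θ`; `⊤` if no finite cover exists. -/
noncomputable def coverNum (Θ : Set V) (δ : ℝ) : ℕ∞ :=
  sInf {x : ℕ∞ | ∃ X : Finset V, ↑X ⊆ Θ ∧ (∀ θ ∈ Θ, ∃ v ∈ X, ‖θ - v‖ ≤ δ) ∧ x = (X.card : ℕ∞)}

end VotingDefs

section MyHelpers

variable {V : Type*} [NormedAddCommGroup V] [NormedSpace ℝ V]
variable {n k m : ℕ}

lemma my_weightG_le (c : Fin m → V) (e : Fin n → V) (pref : Fin n → Fin k → Fin m)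
    {j j' : Fin m} {i : Fin n} (h : Prefers (pref i) j j') :
    weightG c e pref j j' ≤ ‖e i - c j'‖ - ‖e i - c j‖ := by
  apply csInf_le
  · apply Set.Finite.bddBelow
    apply Set.Finite.subset (Set.finite_range (fun i : Fin n => ‖e i - c j'‖ - ‖e i - c j‖))
    rintro x ⟨i, _, rfl⟩; exact ⟨i, rfl⟩
  · exact ⟨i, h, rfl⟩

lemma my_weightG_edgeDelta_le (c : Fin m → V) (e : Fin n → V) (pref : Fin n → Fin k → Fin m)
    (qhat : Fin m → ℝ) (hcons : Consistent c e pref qhat) {δ : ℝ}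
    {u u' : Fin m} (h : EdgeDelta e pref δ u u') :
    weightG c e pref u u' ≤ 2 * δ + qhat u' - qhat u := by
  obtain ⟨i, i', hp, hp', hd⟩ := h
  have h1 := my_weightG_le c e pref hp
  have h2 := hcons i' u' u hp'
  have h3 : ‖e i - c u'‖ ≤ ‖e i - e i'‖ + ‖e i' - c u'‖ := by
    have := norm_add_le (e i - e i') (e i' - c u')
    rwa [sub_add_sub_cancel] at this
  have h4 : ‖e i' - c u‖ ≤ ‖e i' - e i‖ + ‖e i - c u‖ := by
    have := norm_add_le (e i' - e i) (e i - c u)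
    rwa [sub_add_sub_cancel] at this
  have h5 : ‖e i' - e i‖ = ‖e i - e i'‖ := norm_sub_rev _ _
  linarith

lemma my_walkWeight_chain_le (c : Fin m → V) (e : Fin n → V) (pref : Fin n → Fin k → Fin m)
    (qhat : Fin m → ℝ) (hcons : Consistent c e pref qhat) {δ : ℝ} :
    ∀ (l : List (Fin m)) (a : Fin m), List.Chain (EdgeDelta e pref δ) a l →
      walkWeight (weightG c e pref) (a :: l) ≤
        2 * δ * l.length + qhat ((a :: l).getLast (List.cons_ne_nil a l)) - qhat a := by
  intro l
  induction l with
  | nil => intro a _; simp [walkWeight]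
  | cons b t ih =>
      intro a hch
      simp only [List.Chain, List.isChain_cons_cons] at hch
      have h1 := my_weightG_edgeDelta_le c e pref qhat hcons hch.1
      have h2 := ih b hch.2
      have hw : walkWeight (weightG c e pref) (a :: b :: t)
          = weightG c e pref a b + walkWeight (weightG c e pref) (b :: t) := by
        simp [walkWeight]
      have hl : (a :: b :: t).getLast (List.cons_ne_nil _ _)
          = (b :: t).getLast (List.cons_ne_nil _ _) := by
        simp [List.getLast]
      rw [hw, hl]
      have hlen : ((b :: t).length : ℝ) = (t.length : ℝ) + 1 := by
        simp
      rw [hlen] at *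
      push_cast at h2 ⊢
      linarith

lemma my_walkWeight_concat {α : Type*} (w : α → α → ℝ) :
    ∀ (t : List α) (a b : α),
      walkWeight w ((a :: t) ++ [b]) =
        walkWeight w (a :: t) + w ((a :: t).getLast (List.cons_ne_nil a t)) b := by
  intro t
  induction t with
  | nil => intro a b; simp [walkWeight]
  | cons x t' ih =>
      intro a b
      have e1 : walkWeight w ((a :: x :: t') ++ [b])
          = w a x + walkWeight w ((x :: t') ++ [b]) := by
        simp [walkWeight]
      rw [e1, ih x b]
      have hgl : (a :: x :: t').getLast (List.cons_ne_nil _ _)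
          = (x :: t').getLast (List.cons_ne_nil _ _) := by
        simp [List.getLast]
      rw [hgl]
      have e2 : walkWeight w (a :: x :: t') = w a x + walkWeight w (x :: t') := by
        simp [walkWeight]
      rw [e2]; ring

lemma my_prefers_top (hk : 0 < k) (pref : Fin k → Fin m) {j : Fin m}
    (hne : j ≠ pref ⟨0, hk⟩) : Prefers pref (pref ⟨0, hk⟩) j := by
  refine ⟨⟨0, hk⟩, rfl, ?_⟩
  by_cases h : ∃ h' : Fin k, pref h' = j
  · obtain ⟨h', hh'⟩ := h
    right
    refine ⟨h', hh', ?_⟩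
    have hv : h'.val ≠ 0 := by
      intro h0
      apply hne
      rw [← hh']
      congr 1
      exact Fin.ext h0
    exact Fin.lt_def.mpr (Nat.pos_of_ne_zero hv)
  · left
    push_neg at h
    exact h

lemma my_hopDist_walk {α : Type*} (edge : α → α → Prop) (g h : α) (D : ℕ)
    (hle : hopDist edge g h ≤ (D : ℕ∞)) :
    ∃ l : List α, IsWalk edge l g h ∧ l.length - 1 ≤ D := by
  classical
  set S : Set ℕ∞ := {x | ∃ l : List α, IsWalk edge l g h ∧ x = ((l.length - 1 : ℕ) : ℕ∞)}
    with hS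
  have hSne : S.Nonempty := by
    by_contra hne
    rw [Set.not_nonempty_iff_eq_empty] at hne
    rw [hopDist, ← hS, hne, sInf_empty] at hle
    exact (ENat.coe_lt_top D).not_ge hle
  set T : Set ℕ := {nn | (nn : ℕ∞) ∈ S} with hT
  have hTne : T.Nonempty := by
    obtain ⟨x, l, hl, rfl⟩ := hSne
    exact ⟨l.length - 1, ⟨l, hl, rfl⟩⟩
  have hmem : ((sInf T : ℕ) : ℕ∞) ∈ S := Nat.sInf_mem hTne
  obtain ⟨l, hl, hcast⟩ := hmem
  refine ⟨l, hl, ?_⟩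
  have hle2 : ((sInf T : ℕ) : ℕ∞) ≤ (D : ℕ∞) := by
    have h1 : ((sInf T : ℕ) : ℕ∞) ≤ sInf S := by
      apply le_sInf
      rintro b ⟨l', hl', rfl⟩
      exact_mod_cast Nat.sInf_le (show l'.length - 1 ∈ T from ⟨l', hl', rfl⟩)
    exact h1.trans (by rwa [hopDist, ← hS] at hle)
  have hd : sInf T ≤ D := by exact_mod_cast hle2
  have he : sInf T = l.length - 1 := by exact_mod_cast hcast
  omega

end MyHelpers

/-- Let `q̂` be consistent with the profile. Suppose (i) every candidate
location lies in some ball `B(e i, r)` with `r > 0`, and (ii) the diameter of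
`G(C,E,≻^k)[δ]` restricted to the set `V(≻^k)` of first-ranked candidates is finite for some
`δ > 0`. Then every `j*` maximizing `q̂` over `V(≻^k)` satisfies
`max_j d_G(j*, j) ≤ r + 2δ·diam(G(C,E,≻^k)[δ], V(≻^k))`. -/
theorem statement4 {V : Type*} [NormedAddCommGroup V] [NormedSpace ℝ V]
    {n k m : ℕ} (hk : 0 < k)
    (c : Fin m → V) (e : Fin n → V) (pref : Fin n → Fin k → Fin m)
    (hinj : ∀ i, Function.Injective (pref i))
    (qhat : Fin m → ℝ) (hcons : Consistent c e pref qhat)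
    (r : ℝ) (hr : 0 < r) (hballs : ∀ j : Fin m, ∃ i : Fin n, ‖c j - e i‖ ≤ r)
    (δ : ℝ) (hδ : 0 < δ)
    (hdiam : diamS (EdgeDelta e pref δ) {j : Fin m | ∃ i : Fin n, pref i ⟨0, hk⟩ = j} ≠ ⊤)
    (jstar : Fin m) (hjV : ∃ i : Fin n, pref i ⟨0, hk⟩ = jstar)
    (hjmax : ∀ j : Fin m, (∃ i : Fin n, pref i ⟨0, hk⟩ = j) → qhat j ≤ qhat jstar) :
    ∀ j : Fin m,
      distG (HasEdge pref) (weightG c e pref) jstar j ≤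
        ((r + 2 * δ *
          ((diamS (EdgeDelta e pref δ) {j : Fin m | ∃ i : Fin n, pref i ⟨0, hk⟩ = j}).toNat : ℝ)
          : ℝ) : EReal) := by
  intro j
  set Vset : Set (Fin m) := {j : Fin m | ∃ i : Fin n, pref i ⟨0, hk⟩ = j} with hVset
  set D : ℕ := (diamS (EdgeDelta e pref δ) Vset).toNat with hD
  obtain ⟨i, hi⟩ := hballs j
  set v : Fin m := pref i ⟨0, hk⟩ with hv
  have hvV : v ∈ Vset := ⟨i, rfl⟩
  -- get a short EdgeDelta-walk from jstar to v
  have hhop : hopDist (EdgeDelta e pref δ) jstar v ≤ (D : ℕ∞) := by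
    have h1 : hopDist (EdgeDelta e pref δ) jstar v ≤ diamS (EdgeDelta e pref δ) Vset :=
      le_iSup₂_of_le jstar hjV (le_iSup₂_of_le v hvV le_rfl)
    rwa [hD, ENat.coe_toNat hdiam]
  obtain ⟨l, hwalk, hlen⟩ := my_hopDist_walk (EdgeDelta e pref δ) jstar v D hhop
  obtain ⟨t, rfl⟩ : ∃ t, l = jstar :: t := by
    have h2 := hwalk.2.1
    cases l with
    | nil => simp at h2
    | cons a t =>
        simp only [List.head?_cons, Option.some_inj] at h2
        exact ⟨t, by rw [h2]⟩
  have hchain : List.Chain (EdgeDelta e pref δ) jstar t := hwalk.1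
  have hlast : (jstar :: t).getLast (List.cons_ne_nil _ _) = v := by
    have h2 := hwalk.2.2
    rw [List.getLast?_eq_getLast (List.cons_ne_nil _ _)] at h2
    exact Option.some_injective _ h2
  have htlen : (t.length : ℝ) ≤ (D : ℝ) := by
    have : t.length ≤ D := by
      have := hlen
      simp only [List.length_cons] at this
      omega
    exact_mod_cast this
  have hqv : qhat v ≤ qhat jstar := hjmax v hvV
  -- weight bound on the prefix walk
  have hWpre : walkWeight (weightG c e pref) (jstar :: t) ≤ 2 * δ * D := by
    have h1 := my_walkWeight_chain_le c e pref qhat hcons t jstar hchain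
    rw [hlast] at h1
    have h2 : 2 * δ * (t.length : ℝ) ≤ 2 * δ * (D : ℝ) := by
      apply mul_le_mul_of_nonneg_left htlen
      linarith
    linarith
  -- the prefix walk is also a HasEdge-walk
  have hchainH : List.Chain' (HasEdge pref) (jstar :: t) := by
    apply List.IsChain.imp ?_ hwalk.1
    rintro x y ⟨i1, i2, hp, -, -⟩
    exact ⟨i1, hp⟩
  by_cases hjv : j = v
  · -- the prefix walk already ends at j
    have hmem : ((walkWeight (weightG c e pref) (jstar :: t) : ℝ) : EReal) ∈
        {x : EReal | ∃ l : List (Fin m), IsWalk (HasEdge pref) l jstar j ∧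
          x = ((walkWeight (weightG c e pref) l : ℝ) : EReal)} :=
      ⟨jstar :: t, ⟨hchainH, hwalk.2.1, by rw [hjv]; exact hwalk.2.2⟩, rfl⟩
    refine le_trans (sInf_le hmem) ?_
    rw [EReal.coe_le_coe_iff]
    linarith
  · -- append the edge v → j
    have hpref : Prefers (pref i) v j := my_prefers_top hk (pref i) hjv
    have hedge : HasEdge pref v j := ⟨i, hpref⟩
    have hwj : weightG c e pref v j ≤ r := by
      have h1 := my_weightG_le c e pref hpref
      have h2 : ‖e i - c j‖ = ‖c j - e i‖ := norm_sub_rev _ _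
      have h3 : (0 : ℝ) ≤ ‖e i - c v‖ := norm_nonneg _
      linarith
    have hwalk2 : IsWalk (HasEdge pref) ((jstar :: t) ++ [j]) jstar j := by
      refine ⟨?_, ?_, ?_⟩
      · show List.IsChain _ _
        rw [List.isChain_append]
        refine ⟨hchainH, List.isChain_singleton j, ?_⟩
        intro x hx y hy
        rw [List.getLast?_eq_getLast (List.cons_ne_nil _ _), Option.mem_def,
          Option.some_inj] at hx
        simp only [List.head?_cons, Option.mem_def, Option.some_inj] at hy
        rw [← hx, hlast, ← hy]
        exact hedge
      · rfl
      · exact List.getLast?_concat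
    have hW2 : walkWeight (weightG c e pref) ((jstar :: t) ++ [j]) ≤ r + 2 * δ * D := by
      rw [my_walkWeight_concat (weightG c e pref) t jstar j, hlast]
      linarith
    have hmem : ((walkWeight (weightG c e pref) ((jstar :: t) ++ [j]) : ℝ) : EReal) ∈
        {x : EReal | ∃ l : List (Fin m), IsWalk (HasEdge pref) l jstar j ∧
          x = ((walkWeight (weightG c e pref) l : ℝ) : EReal)} :=
      ⟨(jstar :: t) ++ [j], hwalk2, rfl⟩
    refine le_trans (sInf_le hmem) ?_
    rw [EReal.coe_le_coe_iff]
    exact hW2
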